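/- Let K be a field, R_0 a multi-valuation ring on K, and J an R_0-submodule of K (where K is an R_0-module via R_0 ⊆ K) such that: (i) J·J = J, i.e., every product of two elements of J lies in J and every element of J is a finite sum x_1y_1 + ⋯ + x_my_m with all x_j, y_j ∈ J; and (ii) 1 + J is a subgroup of the multiplicative group K^×, i.e., −1 ∉ J, (1+x)(1+y) ∈ 1 + J for all x, y ∈ J, and (1+x)⁻¹ ∈ 1 + J for all x ∈ J. Then there exist pairwise incomparable valuation subrings O_1, …, O_n of K (n ≥ 1) such that the subring {x ∈ K : x·J ⊆ J} equals O_1 ∩ ⋯ ∩ O_n and J = m_1 ∩ ⋯ ∩ m_n (as subsets of K), where m_i is the maximal ideal of O_i. In other words, J is the Jacobson radical of the multi-valuation ring {x ∈ K : x·J ⊆ J}. -/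

import Mathlib

open Finset

namespace MVJR

variable {K : Type*} [Field K]

/-! ### Elementary valuation subring lemmas -/

lemma mem_nonunits_iff' (A : ValuationSubring K) {x : K} :
    x ∈ A.nonunits ↔ x = 0 ∨ x⁻¹ ∉ A := by
  by_cases hx : x = 0
  · subst hx
    simp only [true_or, iff_true]
    rw [ValuationSubring.mem_nonunits_iff]; simp [zero_lt_one]
  · simp only [hx, false_or]
    rw [ValuationSubring.mem_nonunits_iff, ← ValuationSubring.valuation_le_one_iff, map_inv₀,
      not_le, one_lt_inv₀ (zero_lt_iff.mpr (by simpa using hx))]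

lemma inv_mem_of_not_mem (A : ValuationSubring K) {x : K} (h : x ∉ A) : x⁻¹ ∈ A :=
  (A.mem_or_inv_mem x).resolve_left h

/-- `Small A z` : `z` belongs to the maximal ideal of `A` (as a subset of `K`). -/
def Small (A : ValuationSubring K) (z : K) : Prop := z ∈ A ∧ (z = 0 ∨ z⁻¹ ∉ A)

/-- `Unit A z` : `z` is a unit of `A`. -/
def Unit (A : ValuationSubring K) (z : K) : Prop := z ∈ A ∧ z⁻¹ ∈ A

lemma small_zero (A : ValuationSubring K) : Small A 0 := ⟨(zero_mem _), Or.inl rfl⟩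

lemma not_small_one (A : ValuationSubring K) : ¬ Small A 1 := by
  rintro ⟨-, h | h⟩
  · exact one_ne_zero h
  · exact h (by simpa using (one_mem _))

lemma small_mul_mem {A : ValuationSubring K} {a t : K} (ha : Small A a) (ht : t ∈ A) :
    Small A (a * t) := by
  refine ⟨mul_mem ha.1 ht, ?_⟩
  rcases ha.2 with h | h
  · exact Or.inl (by simp [h])
  by_cases h0 : a * t = 0
  · exact Or.inl h0
  refine Or.inr fun hinv => h ?_
  have ht0 : t ≠ 0 := by rintro rfl; exact h0 (by ring)
  have : a⁻¹ = t * (a * t)⁻¹ := by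
    rw [mul_inv, mul_comm a⁻¹, ← mul_assoc, mul_inv_cancel₀ ht0, one_mul]
  rw [this]; exact mul_mem ht hinv

lemma small_neg {A : ValuationSubring K} {a : K} (ha : Small A a) : Small A (-a) := by
  refine ⟨neg_mem ha.1, ?_⟩
  rcases ha.2 with h | h
  · exact Or.inl (by simp [h])
  · refine Or.inr fun hinv => h ?_
    rw [inv_neg] at hinv
    simpa using neg_mem hinv

lemma small_add {A : ValuationSubring K} {a b : K} (ha : Small A a) (hb : Small A b) :
    Small A (a + b) := by
  refine ⟨add_mem ha.1 hb.1, ?_⟩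
  by_cases h0 : a + b = 0
  · exact Or.inl h0
  rcases ha.2 with rfl | hia
  · simpa using hb.2
  rcases hb.2 with rfl | hib
  · simpa using ha.2
  have ha0 : a ≠ 0 := by rintro rfl; exact hia (by simpa using (zero_mem A))
  have hb0 : b ≠ 0 := by rintro rfl; exact hib (by simpa using (zero_mem A))
  refine Or.inr fun hinv => ?_
  rcases A.mem_or_inv_mem (b * a⁻¹) with hba | hab
  · refine hia ?_
    have : a⁻¹ = (a + b)⁻¹ * (1 + b * a⁻¹) := by field_simp
    rw [this]; exact mul_mem hinv (add_mem (one_mem _) hba)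
  · rw [mul_inv, inv_inv] at hab
    refine hib ?_
    have : b⁻¹ = (a + b)⁻¹ * (1 + a * b⁻¹) := by field_simp; ring
    rw [this]
    exact mul_mem hinv (add_mem (one_mem _) (by rwa [mul_comm] at hab))

lemma small_sub {A : ValuationSubring K} {a b : K} (ha : Small A a) (hb : Small A b) :
    Small A (a - b) := by
  rw [sub_eq_add_neg]; exact small_add ha (small_neg hb)

lemma small_sum {A : ValuationSubring K} {ι : Type*} (s : Finset ι) (f : ι → K)
    (h : ∀ i ∈ s, Small A (f i)) : Small A (∑ i ∈ s, f i) := by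
  classical
  induction s using Finset.induction_on with
  | empty => simpa using small_zero A
  | insert _ _ hx ih =>
    rename_i a s
    rw [Finset.sum_insert hx]
    exact small_add (h a (Finset.mem_insert_self a s))
      (ih fun i hi => h i (Finset.mem_insert_of_mem hi))

lemma unit_one (A : ValuationSubring K) : Unit A 1 := ⟨(one_mem _), by simpa using (one_mem _)⟩

lemma unit_mul {A : ValuationSubring K} {a b : K} (ha : Unit A a) (hb : Unit A b) :
    Unit A (a * b) := ⟨mul_mem ha.1 hb.1, by rw [mul_inv]; exact mul_mem ha.2 hb.2⟩

lemma unit_inv {A : ValuationSubring K} {a : K} (ha : Unit A a) : Unit A a⁻¹ :=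
  ⟨ha.2, by simpa using ha.1⟩

lemma unit_pow {A : ValuationSubring K} {a : K} (ha : Unit A a) (k : ℕ) : Unit A (a ^ k) := by
  induction k with
  | zero => simpa using unit_one A
  | succ k ih => rw [pow_succ]; exact unit_mul ih ha

lemma unit_zpow {A : ValuationSubring K} {a : K} (ha : Unit A a) (m : ℤ) : Unit A (a ^ m) := by
  rcases m with m | m
  · simpa using unit_pow ha m
  · rw [zpow_negSucc]; exact unit_inv (unit_pow ha (m + 1))

lemma not_small_of_unit {A : ValuationSubring K} {a : K} (ha : Unit A a) (h0 : a ≠ 0) :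
    ¬ Small A a := by
  rintro ⟨-, h | h⟩
  · exact h0 h
  · exact h ha.2

lemma one_add_small_unit {A : ValuationSubring K} {m : K} (hm : Small A m) : Unit A (1 + m) := by
  refine ⟨add_mem (one_mem _) hm.1, ?_⟩
  have h0 : 1 + m ≠ 0 := by
    rintro h
    have : m = -1 := by linear_combination h
    subst this
    rcases hm.2 with h | h
    · norm_num at h
    · rw [show ((-1 : K))⁻¹ = -1 by norm_num] at h
      exact h (neg_mem (one_mem _))
  by_contra hinv
  have hsm : Small A (1 + m) := ⟨add_mem (one_mem _) hm.1, Or.inr hinv⟩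
  have : Small A 1 := by
    have := small_add hsm (small_neg hm)
    simpa using this
  exact not_small_one A this

/-- In a valuation subring, every element of `A` is either a unit or small. -/
lemma unit_or_small {A : ValuationSubring K} {a : K} (ha : a ∈ A) : Unit A a ∨ Small A a := by
  by_cases h : a⁻¹ ∈ A
  · exact Or.inl ⟨ha, h⟩
  · exact Or.inr ⟨ha, Or.inr h⟩

/-! ### Min trick for finite sums -/

lemma exists_div_mem (A : ValuationSubring K) {ι : Type*} (s : Finset ι) (t : ι → K)
    (h : ∃ i ∈ s, t i ≠ 0) :
    ∃ j ∈ s, t j ≠ 0 ∧ ∀ k ∈ s, t k * (t j)⁻¹ ∈ A := by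
  classical
  induction s using Finset.induction_on with
  | empty => simp at h
  | insert _ _ hx ih =>
    rename_i a s
    by_cases hs : ∃ i ∈ s, t i ≠ 0
    · obtain ⟨j, hj, hj0, hdiv⟩ := ih hs
      by_cases ha0 : t a = 0
      · exact ⟨j, Finset.mem_insert_of_mem hj, hj0, by
          intro k hk
          rcases Finset.mem_insert.mp hk with rfl | hk
          · rw [ha0, zero_mul]; exact zero_mem _
          · exact hdiv k hk⟩
      rcases A.mem_or_inv_mem (t a * (t j)⁻¹) with hc | hc
      · exact ⟨j, Finset.mem_insert_of_mem hj, hj0, by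
          intro k hk
          rcases Finset.mem_insert.mp hk with rfl | hk
          · exact hc
          · exact hdiv k hk⟩
      · rw [mul_inv, inv_inv, mul_comm] at hc
        refine ⟨a, Finset.mem_insert_self a s, ha0, ?_⟩
        intro k hk
        rcases Finset.mem_insert.mp hk with rfl | hk
        · rw [mul_inv_cancel₀ ha0]; exact one_mem _
        · have : t k * (t a)⁻¹ = (t k * (t j)⁻¹) * (t j * (t a)⁻¹) := by
            field_simp
          rw [this]; exact mul_mem (hdiv k hk) hc
    · push_neg at hs
      obtain ⟨i, hi, hi0⟩ := h
      rcases Finset.mem_insert.mp hi with rfl | hi'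
      · refine ⟨i, Finset.mem_insert_self i s, hi0, ?_⟩
        intro k hk
        rcases Finset.mem_insert.mp hk with rfl | hk
        · rw [mul_inv_cancel₀ hi0]; exact one_mem _
        · rw [hs k hk, zero_mul]; exact zero_mem _
      · exact absurd (hs i hi') hi0

lemma sum_div_mem (A : ValuationSubring K) {ι : Type*} (s : Finset ι) (t : ι → K)
    (h : (∑ i ∈ s, t i) ≠ 0) :
    ∃ j ∈ s, t j ≠ 0 ∧ (∑ i ∈ s, t i) * (t j)⁻¹ ∈ A := by
  have hex : ∃ i ∈ s, t i ≠ 0 := by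
    by_contra hc
    push_neg at hc
    exact h (Finset.sum_eq_zero hc)
  obtain ⟨j, hj, hj0, hdiv⟩ := exists_div_mem A s t hex
  refine ⟨j, hj, hj0, ?_⟩
  rw [Finset.sum_mul]
  exact sum_mem fun k hk => hdiv k hk

/-! ### Cyclotomic-style machinery : `phi p a = 1 + a + ... + a^(p-1)` -/

/-- Geometric sum `∑_{k<p} a^k`. -/
def phi (p : ℕ) (a : K) : K := ∑ k ∈ Finset.range p, a ^ k

lemma phi_mem {A : ValuationSubring K} {a : K} (ha : a ∈ A) (p : ℕ) : phi p a ∈ A :=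
  sum_mem fun k _ => pow_mem ha k

lemma phi_mul_sub_one (p : ℕ) (a : K) : phi p a * (a - 1) = a ^ p - 1 := geom_sum_mul a p

lemma phi_small_unit {A : ValuationSubring K} {a : K} (ha : Small A a) {p : ℕ} (hp : 0 < p) :
    Unit A (phi p a) := by
  obtain ⟨q, rfl⟩ := Nat.exists_eq_succ_of_ne_zero hp.ne' 
  rw [phi, Finset.sum_range_succ']
  simp only [pow_zero]
  have : (∑ i ∈ Finset.range q, a ^ (i + 1)) = a * ∑ i ∈ Finset.range q, a ^ i := by
    rw [Finset.mul_sum]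
    exact Finset.sum_congr rfl fun i _ => by ring
  rw [this, add_comm]
  exact one_add_small_unit (small_mul_mem ha (sum_mem fun k _ => pow_mem ha.1 k))

lemma phi_reverse {a : K} (ha : a ≠ 0) (p : ℕ) : phi p a = a ^ (p - 1) * phi p a⁻¹ := by
  rw [phi, phi, Finset.mul_sum, ← Finset.sum_range_reflect]
  refine Finset.sum_congr rfl fun j hj => ?_
  have hj' : j ≤ p - 1 := Nat.le_sub_one_of_lt (Finset.mem_range.mp hj)
  have : a ^ (p - 1) = a ^ (p - 1 - j) * a ^ j := by
    rw [← pow_add]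
    congr 1
    omega
  rw [this, mul_assoc, inv_pow, mul_inv_cancel₀ (pow_ne_zero _ ha), mul_one]

lemma int_cast_mem (A : ValuationSubring K) (m : ℤ) : (m : K) ∈ A := by
  simpa using intCast_mem A.toSubring m

/-- Key exclusion: for a unit `a`, `phi p a` and `phi q a` cannot both be small
for distinct primes `p ≠ q`. -/
lemma phi_exclusion {A : ValuationSubring K} {a : K} (hU : Unit A a) (ha0 : a ≠ 0)
    {p q : ℕ} (hp : p.Prime) (hq : q.Prime) (hpq : p ≠ q)
    (h1 : Small A (phi p a)) (h2 : Small A (phi q a)) : False := by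
  -- the set of integers m with a^m - 1 small is an additive subgroup
  let Z : AddSubgroup ℤ :=
    { carrier := {m : ℤ | Small A (a ^ m - 1)}
      zero_mem' := by simpa using small_zero A
      add_mem' := by
        intro m m' hm hm'
        have key : a ^ (m + m') - 1 = a ^ m * (a ^ m' - 1) + (a ^ m - 1) := by
          rw [zpow_add₀ ha0]; ring
        simpa [Set.mem_setOf_eq, key] using
          small_add (by
            have := small_mul_mem hm' (unit_zpow hU m).1
            rwa [mul_comm] at this) hm
      neg_mem' := by
        intro m hm
        show Small A (a ^ (-m) - 1)
        have hmm : a ^ m * a ^ (-m) = 1 := by rw [← zpow_add₀ ha0]; simp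
        have key : (a ^ m - 1) * (-(a ^ (-m))) = a ^ (-m) - 1 := by
          linear_combination -hmm
        rw [← key]
        exact small_mul_mem hm (neg_mem (unit_zpow hU (-m)).1) }
  have hmemZ : ∀ k : ℕ, Small A (phi k a) → (k : ℤ) ∈ Z := by
    intro k hk
    show Small A (a ^ (k:ℤ) - 1)
    rw [zpow_natCast, ← phi_mul_sub_one]
    exact small_mul_mem hk (sub_mem hU.1 (one_mem _))
  have hpZ := hmemZ p h1
  have hqZ := hmemZ q h2
  have hone : (1 : ℤ) ∈ Z := by
    have hco : Nat.gcd p q = 1 := (Nat.coprime_primes hp hq).mpr hpq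
    have hbez := Nat.gcd_eq_gcd_ab p q
    rw [hco] at hbez
    rw [show (1:ℤ) = p * Nat.gcdA p q + q * Nat.gcdB p q from by exact_mod_cast hbez]
    exact add_mem (by simpa [mul_comm] using Z.zsmul_mem hpZ (Nat.gcdA p q))
      (by simpa [mul_comm] using Z.zsmul_mem hqZ (Nat.gcdB p q))
  have hsub1 : Small A (a - 1) := by
    have h := hone
    change Small A (a ^ (1:ℤ) - 1) at h
    rwa [zpow_one] at h
  -- now phi k a - k is small for every k
  have hphik : ∀ k : ℕ, Small A (phi k a - (k : K)) := by
    intro k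
    have : phi k a - (k : K) = ∑ i ∈ Finset.range k, (a ^ i - 1) := by
      rw [Finset.sum_sub_distrib]
      simp [phi]
    rw [this]
    refine small_sum _ _ fun i _ => ?_
    have : a ^ i - 1 = (a - 1) * phi i a := by
      rw [mul_comm, phi_mul_sub_one]
    rw [this]
    exact small_mul_mem hsub1 (phi_mem hU.1 i)
  have hpK : Small A ((p : K)) := by
    have := small_sub h1 (hphik p)
    simpa using this
  have hqK : Small A ((q : K)) := by
    have := small_sub h2 (hphik q)
    simpa using this
  -- Bezout in K gives that 1 is small, contradiction
  have hco : Nat.gcd p q = 1 := (Nat.coprime_primes hp hq).mpr hpq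
  have hbez := Nat.gcd_eq_gcd_ab p q
  rw [hco] at hbez
  have : (1 : K) = (p : K) * ((Nat.gcdA p q : ℤ) : K) + (q : K) * ((Nat.gcdB p q : ℤ) : K) := by
    have := congrArg (fun m : ℤ => (m : K)) hbez
    push_cast at this ⊢
    linear_combination this
  have : Small A 1 := by
    rw [this]
    exact small_add (small_mul_mem hpK (int_cast_mem A _)) (small_mul_mem hqK (int_cast_mem A _))
  exact not_small_one A this

/-- Field-level exclusion: `phi p a` and `phi q a` cannot both vanish. -/
lemma phi_ne_zero_exclusion {a : K} (ha0 : a ≠ 0) {p q : ℕ}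
    (hp : p.Prime) (hq : q.Prime) (hpq : p ≠ q)
    (h1 : phi p a = 0) (h2 : phi q a = 0) : False := by
  by_cases ha1 : a = 1
  · subst ha1
    have hp' : phi p (1:K) = (p : K) := by simp [phi]
    have hq' : phi q (1:K) = (q : K) := by simp [phi]
    rw [hp'] at h1; rw [hq'] at h2
    have hco : Nat.gcd p q = 1 := (Nat.coprime_primes hp hq).mpr hpq
    have hbez := Nat.gcd_eq_gcd_ab p q
    rw [hco] at hbez
    have : (1 : K) = (p : K) * ((Nat.gcdA p q : ℤ) : K) + (q : K) * ((Nat.gcdB p q : ℤ) : K) := by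
      have := congrArg (fun m : ℤ => (m : K)) hbez
      push_cast at this ⊢
      linear_combination this
    rw [h1, h2] at this
    simp at this
  · have hap : a ^ p = 1 := by
      have := phi_mul_sub_one p a
      rw [h1, zero_mul] at this
      have := this.symm
      rwa [sub_eq_zero] at this
    have haq : a ^ q = 1 := by
      have := phi_mul_sub_one q a
      rw [h2, zero_mul] at this
      have := this.symm
      rwa [sub_eq_zero] at this
    have hone : a ^ (1:ℤ) = 1 := by
      let Z : AddSubgroup ℤ :=
        { carrier := {m : ℤ | a ^ m = 1}
          zero_mem' := by simp
          add_mem' := by intro m m' hm hm'; simp only [Set.mem_setOf_eq] at *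
                         rw [zpow_add₀ ha0, hm, hm', one_mul]
          neg_mem' := by intro m hm; simp only [Set.mem_setOf_eq] at *
                         rw [zpow_neg, hm, inv_one] }
      have hpZ : (p:ℤ) ∈ Z := by show a ^ (p:ℤ) = 1; rw [zpow_natCast, hap]
      have hqZ : (q:ℤ) ∈ Z := by show a ^ (q:ℤ) = 1; rw [zpow_natCast, haq]
      have hco : Nat.gcd p q = 1 := (Nat.coprime_primes hp hq).mpr hpq
      have hbez := Nat.gcd_eq_gcd_ab p q
      rw [hco] at hbez
      show (1:ℤ) ∈ Z
      rw [show (1:ℤ) = p * Nat.gcdA p q + q * Nat.gcdB p q from by exact_mod_cast hbez]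
      exact add_mem (by simpa [mul_comm] using Z.zsmul_mem hpZ (Nat.gcdA p q))
        (by simpa [mul_comm] using Z.zsmul_mem hqZ (Nat.gcdB p q))
    rw [zpow_one] at hone
    exact ha1 hone

/-- There exist finsets of primes of any size. -/
lemma exists_primes_finset (m : ℕ) : ∃ s : Finset ℕ, s.card = m ∧ ∀ p ∈ s, p.Prime := by
  induction m with
  | zero => exact ⟨∅, rfl, by simp⟩
  | succ m ih =>
    obtain ⟨s, hcard, hprime⟩ := ih
    obtain ⟨p, hple, hp⟩ := Nat.exists_infinite_primes (s.sup id + 1)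
    have hps : p ∉ s := by
      intro hmem
      have : p ≤ s.sup id := Finset.le_sup (f := id) hmem
      omega
    exact ⟨insert p s, by rw [Finset.card_insert_of_notMem hps, hcard],
      fun q hq => (Finset.mem_insert.mp hq).elim (fun h => h ▸ hp) (hprime q)⟩

/-! ### The localization lemma (LOC) -/

variable {n : ℕ} (O : Fin n → ValuationSubring K)

lemma exists_good_prime (a : K) (ha0 : a ≠ 0) :
    ∃ p : ℕ, p.Prime ∧ phi p a ≠ 0 ∧
      ∀ j : Fin n, Unit (O j) a → ¬ Small (O j) (phi p a) := by
  classical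
  obtain ⟨s, hcard, hprime⟩ := exists_primes_finset (n + 2)
  by_contra hc
  push_neg at hc
  have hbad : ∀ p ∈ s, phi p a = 0 ∨ ∃ j, Unit (O j) a ∧ Small (O j) (phi p a) := by
    intro p hps
    by_cases h0 : phi p a = 0
    · exact Or.inl h0
    · obtain ⟨j, hj1, hj2⟩ := hc p (hprime p hps) h0
      exact Or.inr ⟨j, hj1, hj2⟩
  set f : ℕ → Option (Fin n) := fun p =>
    if h : ∃ j, Unit (O j) a ∧ Small (O j) (phi p a) then some h.choose else none with hf
  have hinj : Set.InjOn f s := by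
    intro p hps q hqs hfeq
    by_contra hne
    by_cases h1 : ∃ j, Unit (O j) a ∧ Small (O j) (phi p a)
    · by_cases h2 : ∃ j, Unit (O j) a ∧ Small (O j) (phi q a)
      · have : h1.choose = h2.choose := by
          have := hfeq
          simp only [hf, dif_pos h1, dif_pos h2, Option.some_inj] at this
          exact this
        obtain ⟨hu1, hs1⟩ := h1.choose_spec
        obtain ⟨hu2, hs2⟩ := h2.choose_spec
        rw [this] at hs1
        exact phi_exclusion hu2 ha0 (hprime p hps) (hprime q hqs) hne hs1 hs2
      · have := hfeq
        simp only [hf, dif_pos h1, dif_neg h2] at this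
        cases this
    · by_cases h2 : ∃ j, Unit (O j) a ∧ Small (O j) (phi q a)
      · have := hfeq
        simp only [hf, dif_pos h2, dif_neg h1] at this
        cases this
      · have hp0 : phi p a = 0 := (hbad p hps).resolve_right h1
        have hq0 : phi q a = 0 := (hbad q hqs).resolve_right h2
        exact phi_ne_zero_exclusion ha0 (hprime p hps) (hprime q hqs) hne hp0 hq0
  have hle := Finset.card_le_card_of_injOn f
    (fun p _ => Finset.mem_univ (f p)) hinj
  rw [hcard, Finset.card_univ, Fintype.card_option, Fintype.card_fin] at hle
  omega

lemma loc (i : Fin n) (a : K) (ha : a ∈ O i) (ha0 : a ≠ 0) :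
    ∃ s : K, s ≠ 0 ∧ Unit (O i) s ∧ ∀ j, s ∈ O j ∧ s * a ∈ O j := by
  obtain ⟨p, hp, hphi0, hgood⟩ := exists_good_prime O a ha0
  have hp2 : 2 ≤ p := hp.two_le
  set g := phi p a with hgdef
  have hpow_eq : ∀ x : K, x ≠ 0 → x ^ (p - 2) * x = x ^ (p - 1) := by
    intro x hx
    rw [show p - 1 = (p - 2) + 1 from by omega, pow_succ]
  -- facts at places where a is absent
  have habs : ∀ j : Fin n, a ∉ O j →
      Small (O j) a⁻¹ ∧ Unit (O j) (phi p a⁻¹) := by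
    intro j haj
    have hτ : Small (O j) a⁻¹ := ⟨inv_mem_of_not_mem _ haj, Or.inr (by rwa [inv_inv])⟩
    exact ⟨hτ, phi_small_unit hτ (by omega)⟩
  have hgeq : g = a ^ (p - 1) * phi p a⁻¹ := phi_reverse ha0 p
  by_cases hui : a⁻¹ ∈ O i
  · -- `a` is a unit at `i` : take `s = a^(p-2) * g⁻¹`
    have hUi : Unit (O i) a := ⟨ha, hui⟩
    have hgUi : Unit (O i) g := (unit_or_small (phi_mem ha p)).resolve_right (hgood i hUi)
    refine ⟨a ^ (p - 2) * g⁻¹, mul_ne_zero (pow_ne_zero _ ha0) (inv_ne_zero hphi0),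
      unit_mul (unit_pow hUi _) (unit_inv hgUi), ?_⟩
    intro j
    have hsa : a ^ (p - 2) * g⁻¹ * a = a ^ (p - 1) * g⁻¹ := by
      rw [← hpow_eq a ha0]; ring
    by_cases haj : a ∈ O j
    · have hgUj : Unit (O j) g := by
        rcases unit_or_small haj with hUj | hSj
        · exact (unit_or_small (phi_mem haj p)).resolve_right (hgood j hUj)
        · exact phi_small_unit hSj (by omega)
      exact ⟨mul_mem (pow_mem haj _) hgUj.2,
        by rw [hsa]; exact mul_mem (pow_mem haj _) hgUj.2⟩
    · obtain ⟨hτ, hh⟩ := habs j haj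
      have hsval : a ^ (p - 2) * g⁻¹ = a⁻¹ * (phi p a⁻¹)⁻¹ := by
        rw [hgeq, mul_inv, ← mul_assoc]
        congr 1
        rw [← hpow_eq a ha0, mul_inv, ← mul_assoc,
          mul_inv_cancel₀ (pow_ne_zero _ ha0), one_mul]
      constructor
      · rw [hsval]; exact mul_mem hτ.1 hh.2
      · rw [hsa, hgeq, mul_inv, ← mul_assoc, mul_inv_cancel₀ (pow_ne_zero _ ha0), one_mul]
        exact hh.2
  · -- `a` is small at `i` : take `s = g⁻¹`
    have hSi : Small (O i) a := ⟨ha, Or.inr hui⟩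
    have hgUi : Unit (O i) g := phi_small_unit hSi (by omega)
    refine ⟨g⁻¹, inv_ne_zero hphi0, unit_inv hgUi, ?_⟩
    intro j
    by_cases haj : a ∈ O j
    · have hgUj : Unit (O j) g := by
        rcases unit_or_small haj with hUj | hSj
        · exact (unit_or_small (phi_mem haj p)).resolve_right (hgood j hUj)
        · exact phi_small_unit hSj (by omega)
      exact ⟨hgUj.2, mul_mem hgUj.2 haj⟩
    · obtain ⟨hτ, hh⟩ := habs j haj
      have hsval : g⁻¹ = a⁻¹ ^ (p - 1) * (phi p a⁻¹)⁻¹ := by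
        rw [hgeq, mul_inv, inv_pow]
      constructor
      · rw [hsval]; exact mul_mem (pow_mem hτ.1 _) hh.2
      · have : g⁻¹ * a = a⁻¹ ^ (p - 2) * (phi p a⁻¹)⁻¹ := by
          calc g⁻¹ * a = a⁻¹ ^ (p - 2) * (a⁻¹ * a) * (phi p a⁻¹)⁻¹ := by
                rw [hsval, show p - 1 = (p - 2) + 1 from by omega, pow_succ]; ring
            _ = a⁻¹ ^ (p - 2) * (phi p a⁻¹)⁻¹ := by
                rw [inv_mul_cancel₀ ha0, mul_one]
        rw [this]
        exact mul_mem (pow_mem hτ.1 _) hh.2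

/-! ### The module `J` and the sets `OJ` -/

variable (Js : Set K)

/-- `O_i`-module generated by `J` (elementwise description). -/
def OJ (A : ValuationSubring K) : Set K :=
  {x | x = 0 ∨ ∃ w ∈ Js, w ≠ 0 ∧ x * w⁻¹ ∈ A}

variable {Js}
variable (hJ0 : (0:K) ∈ Js)
variable (hJadd : ∀ x ∈ Js, ∀ y ∈ Js, x + y ∈ Js)
variable (hJmul : ∀ x ∈ Js, ∀ y ∈ Js, x * y ∈ Js)
variable (hJsum : ∀ z ∈ Js, ∃ (m : ℕ) (x y : Fin m → K),
    (∀ j, x j ∈ Js) ∧ (∀ j, y j ∈ Js) ∧ z = ∑ j, x j * y j)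

lemma J_subset_OJ (A : ValuationSubring K) {x : K} (hx : x ∈ Js) : x ∈ OJ Js A := by
  by_cases h : x = 0
  · exact Or.inl h
  · exact Or.inr ⟨x, hx, h, by rw [mul_inv_cancel₀ h]; exact one_mem _⟩

lemma oj_mul_mem {A : ValuationSubring K} {a x : K} (ha : a ∈ A) (hx : x ∈ OJ Js A) :
    a * x ∈ OJ Js A := by
  rcases hx with rfl | ⟨w, hw, hw0, hx⟩
  · exact Or.inl (mul_zero a)
  by_cases h : a * x = 0
  · exact Or.inl h
  · exact Or.inr ⟨w, hw, hw0, by rw [mul_assoc]; exact mul_mem ha hx⟩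

include hJsum in
lemma oj_decomp {A : ValuationSubring K} {x : K} (hx : x ∈ OJ Js A) (hx0 : x ≠ 0) :
    ∃ c d u, c ∈ Js ∧ d ∈ Js ∧ c ≠ 0 ∧ d ≠ 0 ∧ u ∈ A ∧ x = c * d * u := by
  rcases hx with rfl | ⟨w, hw, hw0, hx⟩
  · exact absurd rfl hx0
  obtain ⟨m, xs, ys, hxs, hys, hsum⟩ := hJsum w hw
  obtain ⟨j, -, hj0, hdiv⟩ := sum_div_mem A Finset.univ (fun j => xs j * ys j)
    (by rw [← hsum]; exact hw0)
  rw [← hsum] at hdiv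
  have hxj : xs j ≠ 0 := left_ne_zero_of_mul hj0
  have hyj : ys j ≠ 0 := right_ne_zero_of_mul hj0
  refine ⟨xs j, ys j, (x * w⁻¹) * (w * (xs j * ys j)⁻¹), hxs j, hys j, hxj, hyj,
    mul_mem hx hdiv, ?_⟩
  rw [show xs j * ys j * ((x * w⁻¹) * (w * (xs j * ys j)⁻¹))
      = x * (w⁻¹ * w) * ((xs j * ys j) * (xs j * ys j)⁻¹) from by ring,
    inv_mul_cancel₀ hw0, mul_inv_cancel₀ hj0, mul_one, mul_one]

lemma oj_flip {A : ValuationSubring K} {x z : K} (hx : x ∉ OJ Js A) (hx0 : x ≠ 0)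
    (hz : z ∈ OJ Js A) : z * x⁻¹ ∈ A := by
  by_cases hz0 : z = 0
  · rw [hz0, zero_mul]; exact zero_mem _
  rcases hz with rfl | ⟨w, hw, hw0, hz⟩
  · exact absurd rfl hz0
  rcases A.mem_or_inv_mem (z * x⁻¹) with h | h
  · exact h
  · exfalso
    rw [mul_inv, inv_inv] at h
    apply hx
    refine Or.inr ⟨w, hw, hw0, ?_⟩
    have : x * w⁻¹ = (z⁻¹ * x) * (z * w⁻¹) := by
      rw [show (z⁻¹ * x) * (z * w⁻¹) = (z⁻¹ * z) * (x * w⁻¹) from by ring,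
        inv_mul_cancel₀ hz0, one_mul]
    rw [this]
    exact mul_mem h hz

include hJsum in
lemma oj_mul_not {A : ValuationSubring K} {x y : K} (hx : x ∉ OJ Js A) (hy : y ∉ OJ Js A)
    (hx0 : x ≠ 0) (hy0 : y ≠ 0) : x * y ∉ OJ Js A := by
  intro hxy
  rcases hxy with h | ⟨w, hw, hw0, hxy⟩
  · exact (mul_ne_zero hx0 hy0) h
  obtain ⟨c, d, u, hc, hd, hc0, hd0, hu, hweq⟩ :=
    oj_decomp hJsum (J_subset_OJ A hw) hw0
  have hu0 : u ≠ 0 := by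
    intro h
    apply hw0
    rw [hweq, h, mul_zero]
  have hdy : d * y⁻¹ ∈ A := oj_flip hy hy0 (J_subset_OJ A hd)
  have hxc : x * c⁻¹ = ((x * y) * w⁻¹) * u * (d * y⁻¹) := by
    rw [hweq, mul_inv, mul_inv]
    rw [show x * y * (c⁻¹ * d⁻¹ * u⁻¹) * u * (d * y⁻¹)
        = x * c⁻¹ * ((y * y⁻¹) * ((d⁻¹ * d) * (u⁻¹ * u))) from by ring,
      mul_inv_cancel₀ hy0, inv_mul_cancel₀ hd0, inv_mul_cancel₀ hu0]
    ring
  apply hx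
  refine Or.inr ⟨c, hc, hc0, ?_⟩
  rw [hxc]
  exact mul_mem (mul_mem hxy hu) hdy

include hJsum in
lemma oj_pow {A : ValuationSubring K} {x : K} (hx0 : x ≠ 0) {e : ℕ} (he : 0 < e)
    (hxe : x ^ e ∈ OJ Js A) : x ∈ OJ Js A := by
  by_contra hx
  have : ∀ k : ℕ, 0 < k → x ^ k ∉ OJ Js A := by
    intro k hk
    induction k with
    | zero => omega
    | succ k ih =>
      by_cases hk0 : k = 0
      · subst hk0; simpa using hx
      · have hklt : 0 < k := Nat.pos_of_ne_zero hk0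
        have := oj_mul_not hJsum (ih hklt) hx (pow_ne_zero _ hx0) hx0
        rwa [← pow_succ] at this
  exact this e he hxe

/-! ### The localization engine and the core decomposition -/

/-- The multi-valuation ring `⋂ O i`. -/
def R0 : Subring K := ⨅ i, (O i).toSubring

lemma mem_R0 {m : ℕ} {OO : Fin m → ValuationSubring K} {x : K} :
    x ∈ R0 OO ↔ ∀ i, x ∈ OO i := Subring.mem_iInf

/-- The center of `O i` on `R0 O` as an ideal. -/
def Pid (i : Fin n) : Ideal ↥(R0 O) where
  carrier := {r | Small (O i) (r : K)}
  zero_mem' := by simpa using small_zero (O i)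
  add_mem' := by
    intro r s hr hs
    simpa using small_add hr hs
  smul_mem' := by
    intro c r hr
    have hc : (c : K) ∈ O i := mem_R0.mp c.2 i
    have := small_mul_mem hr hc
    rw [mul_comm] at this
    simpa using this

lemma Pid_prime (i : Fin n) : (Pid O i).IsPrime := by
  constructor
  · intro h
    have : (1 : ↥(R0 O)) ∈ Pid O i := h ▸ Submodule.mem_top
    exact not_small_one (O i) (by simpa using (show Small (O i) ((1 : ↥(R0 O)) : K) from this))
  · intro r s hrs
    by_cases hr0 : (r : K) = 0
    · left
      show Small (O i) (r : K)
      rw [hr0]; exact small_zero _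
    have hrs' : Small (O i) ((r : K) * (s : K)) := by simpa using (show Small (O i) ((r * s : ↥(R0 O)) : K) from hrs)
    have hr : (r : K) ∈ O i := mem_R0.mp r.2 i
    rcases unit_or_small hr with hur | hsr
    · right
      show Small (O i) (s : K)
      have := small_mul_mem hrs' hur.2
      rwa [mul_comm (r : K) (s : K), mul_assoc, mul_inv_cancel₀ hr0, mul_one] at this
    · exact Or.inl hsr

lemma ideal_le_Pid (hn : 0 < n) (I : Ideal ↥(R0 O)) (hI : I ≠ ⊤) : ∃ i, I ≤ Pid O i := by
  classical
  obtain ⟨M, hMmax, hIM⟩ := Ideal.exists_le_maximal I hI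
  have hsub : (M : Set ↥(R0 O)) ⊆ ⋃ i ∈ (Finset.univ : Finset (Fin n)), (Pid O i : Set _) := by
    intro r hrM
    by_contra hr
    simp only [Set.mem_iUnion, Finset.mem_univ, exists_prop, true_and, not_exists,
      SetLike.mem_coe] at hr
    -- r is a unit of R0
    have hrinv : ∀ i, ((r : K))⁻¹ ∈ O i := by
      intro i
      have : ¬ Small (O i) (r : K) := hr i
      rcases unit_or_small (mem_R0.mp r.2 i) with h | h
      · exact h.2
      · exact absurd h this
    have hr0 : (r : K) ≠ 0 := by
      intro h
      exact hr ⟨0, hn⟩ (show Small (O ⟨0, hn⟩) (r : K) from by rw [h]; exact small_zero _)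
    have hunit : IsUnit r := by
      refine isUnit_iff_exists_inv.mpr ⟨⟨(r:K)⁻¹, mem_R0.mpr hrinv⟩, ?_⟩
      exact Subtype.ext (by simpa using mul_inv_cancel₀ hr0)
    exact hMmax.ne_top (M.eq_top_of_isUnit_mem hrM hunit)
  have := (Ideal.subset_union_prime (⟨0, hn⟩ : Fin n) ⟨0, hn⟩
    (fun i _ _ _ => Pid_prime O i)).mp hsub
  obtain ⟨i, -, hMi⟩ := this
  exact ⟨i, hIM.trans hMi⟩

include hJ0 hJadd in
lemma core (hn : 0 < n) (hJsmul : ∀ r : K, (∀ i, r ∈ O i) → ∀ x ∈ Js, r * x ∈ Js)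
    (x : K) (h : ∀ i, x ∈ OJ Js (O i)) : x ∈ Js := by
  by_cases hx0 : x = 0
  · exact hx0 ▸ hJ0
  let Idl : Ideal ↥(R0 O) :=
    { carrier := {r | (r : K) * x ∈ Js}
      zero_mem' := by simpa using hJ0
      add_mem' := by
        intro r s hr hs
        have := hJadd _ hr _ hs
        simpa [add_mul] using this
      smul_mem' := by
        intro c r hr
        have := hJsmul (c : K) (fun i => mem_R0.mp c.2 i) _ hr
        simpa [mul_assoc] using this }
  have htop : Idl = ⊤ := by
    by_contra hIne
    obtain ⟨i, hle⟩ := ideal_le_Pid O hn Idl hIne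
    obtain ⟨w, hw, hw0, ha⟩ := (h i).resolve_left hx0
    have ha0 : x * w⁻¹ ≠ 0 := mul_ne_zero hx0 (inv_ne_zero hw0)
    obtain ⟨s, hs0, hsU, hsj⟩ := loc O i (x * w⁻¹) ha ha0
    have hsR : s ∈ R0 O := mem_R0.mpr fun j => (hsj j).1
    have hsIdl : (⟨s, hsR⟩ : ↥(R0 O)) ∈ Idl := by
      show s * x ∈ Js
      have hxw : x = (x * w⁻¹) * w := by
        field_simp
      rw [hxw, ← mul_assoc]
      exact hJsmul (s * (x * w⁻¹)) (fun j => (hsj j).2) w hw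
    have := hle hsIdl
    exact not_small_of_unit hsU hs0 this
  have hone : (1 : ↥(R0 O)) ∈ Idl := htop ▸ Submodule.mem_top
  have : ((1 : ↥(R0 O)) : K) * x ∈ Js := hone
  simpa using this

include hJ0 hJadd hJsum in
lemma claimA (hn : 0 < n) (hJsmul : ∀ r : K, (∀ i, r ∈ O i) → ∀ x ∈ Js, r * x ∈ Js)
    (x : K) (hx0 : x ≠ 0) (N : ℕ) (hN : 0 < N) (c : ℕ → K)
    (hc : ∀ m, c m ∈ Js) (heq : x ^ N = ∑ m ∈ Finset.range N, c m * x ^ m) : x ∈ Js := by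
  apply core O hJ0 hJadd hn hJsmul
  intro i
  obtain ⟨m, hm, hm0, hdiv⟩ := sum_div_mem (O i) (Finset.range N) (fun m => c m * x ^ m)
    (by rw [← heq]; exact pow_ne_zero _ hx0)
  rw [← heq] at hdiv
  have hcm0 : c m ≠ 0 := left_ne_zero_of_mul hm0
  have hmN : m < N := Finset.mem_range.mp hm
  have hxm : x ^ m ≠ 0 := pow_ne_zero _ hx0
  have hxe : x ^ (N - m) * (c m)⁻¹ ∈ O i := by
    have key : x ^ N * (c m * x ^ m)⁻¹ = x ^ (N - m) * (c m)⁻¹ := by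
      rw [show x ^ N = x ^ (N - m) * x ^ m from by rw [← pow_add]; congr 1; omega, mul_inv]
      rw [show x ^ (N - m) * x ^ m * ((c m)⁻¹ * (x ^ m)⁻¹)
          = x ^ (N - m) * (c m)⁻¹ * (x ^ m * (x ^ m)⁻¹) from by ring,
        mul_inv_cancel₀ hxm, mul_one]
    rw [← key]
    exact hdiv
  have hpow : x ^ (N - m) ∈ OJ Js (O i) := Or.inr ⟨c m, hc m, hcm0, hxe⟩
  exact oj_pow hJsum hx0 (by omega) hpow

/-! ### The stabilizer and Chevalley extension -/

variable (Js) in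
/-- Stabilizer of `Js`. -/
def stab : Set K := {x | ∀ y ∈ Js, x * y ∈ Js}

include hJ0 in
lemma stab_zero : (0:K) ∈ stab Js := fun y _ => by rw [zero_mul]; exact hJ0

lemma stab_one : (1:K) ∈ stab Js := fun y hy => by rwa [one_mul]

include hJadd in
lemma stab_add {a b : K} (ha : a ∈ stab Js) (hb : b ∈ stab Js) : a + b ∈ stab Js := by
  intro y hy
  rw [add_mul]
  exact hJadd _ (ha y hy) _ (hb y hy)

lemma stab_mul {a b : K} (ha : a ∈ stab Js) (hb : b ∈ stab Js) : a * b ∈ stab Js := by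
  intro y hy
  rw [mul_assoc]
  exact ha _ (hb y hy)

lemma stab_neg (hJneg : ∀ x ∈ Js, -x ∈ Js) {a : K} (ha : a ∈ stab Js) : -a ∈ stab Js := by
  intro y hy
  rw [neg_mul]
  exact hJneg _ (ha y hy)

include hJmul in
lemma J_subset_stab {a : K} (ha : a ∈ Js) : a ∈ stab Js := fun y hy => hJmul a ha y hy

include hJ0 hJadd in
lemma stab_sum {ι : Type*} (s : Finset ι) (f : ι → K) (h : ∀ i ∈ s, f i ∈ stab Js) :
    (∑ i ∈ s, f i) ∈ stab Js := by
  classical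
  induction s using Finset.induction_on with
  | empty => simpa using stab_zero hJ0
  | insert _ _ hx ih =>
    rename_i a s
    rw [Finset.sum_insert hx]
    exact stab_add hJadd (h a (Finset.mem_insert_self a s))
      (ih fun i hi => h i (Finset.mem_insert_of_mem hi))

include hJ0 hJadd in
lemma Js_sum {ι : Type*} (s : Finset ι) (f : ι → K) (h : ∀ i ∈ s, f i ∈ Js) :
    (∑ i ∈ s, f i) ∈ Js := by
  classical
  induction s using Finset.induction_on with
  | empty => simpa using hJ0
  | insert _ _ hx ih =>
    rename_i a s
    rw [Finset.sum_insert hx]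
    exact hJadd _ (h a (Finset.mem_insert_self a s)) _
      (ih fun i hi => h i (Finset.mem_insert_of_mem hi))

variable (Js) in
/-- The subring of polynomials in `u` with coefficients in the stabilizer of `Js`. -/
def polyB (hJ0 : (0:K) ∈ Js) (hJadd : ∀ x ∈ Js, ∀ y ∈ Js, x + y ∈ Js)
    (hJneg : ∀ x ∈ Js, -x ∈ Js) (u : K) : Subring K where
  carrier := {z | ∃ P : Polynomial K, (∀ l, P.coeff l ∈ stab Js) ∧ z = P.eval u}
  one_mem' := ⟨1, fun l => by
    rcases eq_or_ne l 0 with rfl | hl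
    · simpa using stab_one
    · simp only [Polynomial.coeff_one, if_neg (Ne.symm hl)]
      simpa [hl] using stab_zero hJ0, by simp⟩
  zero_mem' := ⟨0, fun l => by simpa using stab_zero hJ0, by simp⟩
  mul_mem' := by
    rintro a b ⟨P, hP, rfl⟩ ⟨Q, hQ, rfl⟩
    refine ⟨P * Q, fun l => ?_, by simp⟩
    rw [Polynomial.coeff_mul]
    exact stab_sum hJ0 hJadd _ _ fun ij _ => stab_mul (hP ij.1) (hQ ij.2)
  add_mem' := by
    rintro a b ⟨P, hP, rfl⟩ ⟨Q, hQ, rfl⟩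
    refine ⟨P + Q, fun l => ?_, by simp⟩
    rw [Polynomial.coeff_add]
    exact stab_add hJadd (hP l) (hQ l)
  neg_mem' := by
    rintro a ⟨P, hP, rfl⟩
    refine ⟨-P, fun l => ?_, by simp⟩
    rw [Polynomial.coeff_neg]
    exact stab_neg hJneg (hP l)

variable (Js) in
/-- `Gcond Js V` : `V` is a valuation overring of the stabilizer whose maximal ideal
contains `Js`. -/
def Gcond (V : ValuationSubring K) : Prop :=
  stab Js ⊆ (V : Set K) ∧ Js ⊆ (V.nonunits : Set K)

/-- Chevalley-type extension: from an ideal avoiding `1` and containing `Js`,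
produce a valuation overring. -/
lemma chev_extract (B : Subring K) (I : Ideal ↥B) (hI : I ≠ ⊤)
    (hJI : ∀ z ∈ Js, ∃ h : z ∈ B, (⟨z, h⟩ : ↥B) ∈ I) (hstabB : stab Js ⊆ (B : Set K)) :
    ∃ V : ValuationSubring K, Gcond Js V ∧ (B : Set K) ⊆ (V : Set K) := by
  obtain ⟨M, hMmax, hIM⟩ := Ideal.exists_le_maximal I hI
  haveI := hMmax.isPrime
  obtain ⟨V, hV⟩ := (LocalSubring.ofPrime B M).exists_le_valuationSubring
  obtain ⟨hle, hloc⟩ := hV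
  have hBV : (B : Set K) ⊆ (V : Set K) := fun b hb => hle (LocalSubring.le_ofPrime B M hb)
  refine ⟨V, ⟨fun r hr => hBV (hstabB hr), ?_⟩, hBV⟩
  intro z hz
  obtain ⟨hzB, hzI⟩ := hJI z hz
  show z ∈ V.nonunits
  rw [mem_nonunits_iff']
  by_cases hz0 : z = 0
  · exact Or.inl hz0
  refine Or.inr fun hinv => ?_
  have hzM : (⟨z, hzB⟩ : ↥B) ∈ M := hIM hzI
  -- the image of `z` in the localization is a unit in `V`, hence a unit in the localization
  have hzV : z ∈ V := hBV hzB
  set zloc : ↥(LocalSubring.ofPrime B M).toSubring :=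
    algebraMap ↥B ↥(LocalSubring.ofPrime B M).toSubring ⟨z, hzB⟩ with hzloc
  have hU : IsUnit (Subring.inclusion hle zloc) := by
    refine isUnit_iff_exists_inv.mpr ⟨⟨z⁻¹, hinv⟩, ?_⟩
    ext
    exact mul_inv_cancel₀ hz0
  have hUloc : IsUnit zloc := hloc.1 _ hU
  have := (IsLocalization.AtPrime.isUnit_to_map_iff
    ↥(LocalSubring.ofPrime B M).toSubring M (⟨z, hzB⟩ : ↥B)).mp hUloc
  exact this hzM

include hJ0 hJadd hJmul hJsum in
/-- Normalization step: a relation `1 = P(x⁻¹)` with coefficients in `Js` forces `x ∈ Js`. -/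
lemma mem_of_one_eq_eval (hn : 0 < n)
    (hJsmul : ∀ r : K, (∀ i, r ∈ O i) → ∀ x ∈ Js, r * x ∈ Js)
    (hJ1 : (1:K) ∉ Js) (hJneg : ∀ x ∈ Js, -x ∈ Js)
    (hJinv : ∀ x ∈ Js, (1 + x)⁻¹ - 1 ∈ Js)
    (x : K) (hx0 : x ≠ 0) (P : Polynomial K) (hP : ∀ l, P.coeff l ∈ Js)
    (h1 : (1:K) = P.eval x⁻¹) : x ∈ Js := by
  set D := P.natDegree with hD
  set c : ℕ → K := fun l => P.coeff l with hc
  have h1' : (1:K) = ∑ l ∈ Finset.range (D+1), c l * (x⁻¹)^l := by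
    rw [h1, Polynomial.eval_eq_sum_range]
  have hpowmul : ∀ l k : ℕ, l ≤ k → (x⁻¹)^l * x^k = x^(k-l) := by
    intro l k hlk
    rw [inv_pow, show x^k = x^(k-l) * x^l from by rw [← pow_add]; congr 1; omega,
      show (x^l)⁻¹ * (x^(k-l) * x^l) = x^(k-l) * ((x^l)⁻¹ * x^l) from by ring,
      inv_mul_cancel₀ (pow_ne_zero _ hx0), mul_one]
  have hkey : x^D = ∑ l ∈ Finset.range (D+1), c l * x^(D-l) := by
    calc x^D = (∑ l ∈ Finset.range (D+1), c l * (x⁻¹)^l) * x^D := by rw [← h1', one_mul]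
    _ = ∑ l ∈ Finset.range (D+1), c l * ((x⁻¹)^l * x^D) := by
        rw [Finset.sum_mul]
        exact Finset.sum_congr rfl fun l _ => by ring
    _ = ∑ l ∈ Finset.range (D+1), c l * x^(D-l) := by
        refine Finset.sum_congr rfl fun l hl => ?_
        rw [hpowmul l D (by have := Finset.mem_range.mp hl; omega)]
  have hsplit : x^D = (∑ l ∈ Finset.range D, c (l+1) * x^(D-(l+1))) + c 0 * x^D := by
    have h := hkey
    rw [Finset.sum_range_succ' (fun l => c l * x^(D-l)) D, Nat.sub_zero] at h
    exact h
  by_cases hD0 : D = 0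
  · rw [hD0] at hsplit
    simp only [Finset.range_zero, Finset.sum_empty, pow_zero, mul_one, zero_add] at hsplit
    exact absurd (hsplit ▸ hP 0) hJ1
  have hc0 : (1:K) - c 0 ≠ 0 := by
    intro h
    have : (1:K) = c 0 := by linear_combination h
    exact hJ1 (this ▸ hP 0)
  set e : K := (1 + -(c 0))⁻¹ - 1 with he_def
  have he : e ∈ Js := hJinv _ (hJneg _ (hP 0))
  have hinv_eq : ((1:K) - c 0)⁻¹ = 1 + e := by
    rw [he_def, sub_eq_add_neg]
    ring
  have h2 : ((1:K) - c 0) * x^D = ∑ l ∈ Finset.range D, c (l+1) * x^(D-(l+1)) := by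
    rw [sub_mul, one_mul]
    linear_combination hsplit
  have h3 : x^D = ∑ l ∈ Finset.range D, ((1+e) * c (l+1)) * x^(D-(l+1)) := by
    calc x^D = ((1:K) - c 0)⁻¹ * (((1:K) - c 0) * x^D) := by
          rw [← mul_assoc, inv_mul_cancel₀ hc0, one_mul]
    _ = (1+e) * ∑ l ∈ Finset.range D, c (l+1) * x^(D-(l+1)) := by rw [h2, hinv_eq]
    _ = ∑ l ∈ Finset.range D, ((1+e) * c (l+1)) * x^(D-(l+1)) := by
        rw [Finset.mul_sum]
        exact Finset.sum_congr rfl fun l _ => by ring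
  have hstabe : (1+e) ∈ stab Js := stab_add hJadd stab_one (J_subset_stab hJmul he)
  set d : ℕ → K := fun m => (1+e) * c (D - m) with hd_def
  have hd : ∀ m, d m ∈ Js := fun m => hstabe _ (hP _)
  have hfinal : x^D = ∑ m ∈ Finset.range D, d m * x^m := by
    rw [h3, ← Finset.sum_range_reflect (fun m => d m * x^m) D]
    refine Finset.sum_congr rfl fun l hl => ?_
    have hlD := Finset.mem_range.mp hl
    have hidx1 : D - (D - 1 - l) = l + 1 := by omega
    have hidx2 : D - 1 - l = D - (l + 1) := by omega
    show ((1+e) * c (l+1)) * x^(D-(l+1)) = d (D - 1 - l) * x^(D - 1 - l)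
    rw [hd_def]
    simp only []
    rw [hidx1, hidx2]
  exact claimA O hJ0 hJadd hJsum hn hJsmul x hx0 D (by omega) d hd hfinal

include hJ0 hJadd hJmul hJsum in
/-- Main step: if `x ∉ Js`, there is a valuation ring in `G` containing `x⁻¹`. -/
lemma exists_V_of_not_mem (hn : 0 < n)
    (hJsmul : ∀ r : K, (∀ i, r ∈ O i) → ∀ x ∈ Js, r * x ∈ Js)
    (hJ1 : (1:K) ∉ Js) (hJneg : ∀ x ∈ Js, -x ∈ Js)
    (hJinv : ∀ x ∈ Js, (1 + x)⁻¹ - 1 ∈ Js)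
    (x : K) (hx0 : x ≠ 0) (hxJ : x ∉ Js) :
    ∃ V : ValuationSubring K, Gcond Js V ∧ x⁻¹ ∈ V := by
  set B := polyB Js hJ0 hJadd hJneg x⁻¹ with hB
  -- the ideal of elements of B representable with coefficients in Js
  let I : Ideal ↥B :=
    { carrier := {z | ∃ P : Polynomial K, (∀ l, P.coeff l ∈ Js) ∧ (z : K) = P.eval x⁻¹}
      zero_mem' := ⟨0, fun l => by simpa using hJ0, by simp⟩
      add_mem' := by
        rintro a b ⟨P, hP, ha⟩ ⟨Q, hQ, hb⟩
        refine ⟨P + Q, fun l => by rw [Polynomial.coeff_add]; exact hJadd _ (hP l) _ (hQ l), ?_⟩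
        push_cast
        rw [ha, hb]; simp
      smul_mem' := by
        rintro c z ⟨P, hP, hz⟩
        obtain ⟨Q, hQ, hc⟩ := c.2
        refine ⟨Q * P, fun l => ?_, ?_⟩
        · rw [Polynomial.coeff_mul]
          exact Js_sum hJ0 hJadd _ _ fun ij _ => hQ ij.1 _ (hP ij.2)
        · show ((c * z : ↥B) : K) = _
          push_cast
          rw [hz, hc]; simp }
  have hI : I ≠ ⊤ := by
    intro htop
    have h1 : (1 : ↥B) ∈ I := htop ▸ Submodule.mem_top
    obtain ⟨P, hP, hP1⟩ := h1
    -- normalize and apply claimA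
    exact hxJ (mem_of_one_eq_eval O hJ0 hJadd hJmul hJsum hn hJsmul hJ1 hJneg hJinv
      x hx0 P hP (by simpa using hP1))
  obtain ⟨V, hGV, hBV⟩ := chev_extract (B := B) I hI
    (fun z hz => ⟨⟨Polynomial.C z, fun l => by
        rcases eq_or_ne l 0 with rfl | hl
        · simpa using J_subset_stab hJmul hz
        · simp only [Polynomial.coeff_C, if_neg hl]
          exact stab_zero hJ0, by simp⟩,
      ⟨Polynomial.C z, fun l => by
        rcases eq_or_ne l 0 with rfl | hl
        · simpa using hz
        · simp only [Polynomial.coeff_C, if_neg hl]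
          exact hJ0, by simp⟩⟩)
    (fun r hr => ⟨Polynomial.C r, fun l => by
        rcases eq_or_ne l 0 with rfl | hl
        · simpa using hr
        · simp only [Polynomial.coeff_C, if_neg hl]
          exact stab_zero hJ0, by simp⟩)
  exact ⟨V, hGV, hBV ⟨Polynomial.X, fun l => by
    rcases eq_or_ne l 1 with rfl | hl
    · simpa using stab_one
    · simp only [Polynomial.coeff_X, if_neg (Ne.symm hl)]
      exact stab_zero hJ0, by simp⟩⟩

/-! ### Lemma X : valuation overrings of the stabilizer contain one of the `O i` -/

lemma lemX (hn : 0 < n)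
    (hJsmul : ∀ r : K, (∀ i, r ∈ O i) → ∀ x ∈ Js, r * x ∈ Js)
    (V : ValuationSubring K) (hV : stab Js ⊆ (V : Set K)) :
    ∃ i, (O i : Set K) ⊆ (V : Set K) := by
  have hR0V : ∀ r : K, r ∈ R0 O → r ∈ V := fun r hr =>
    hV (fun y hy => hJsmul r (mem_R0.mp hr) y hy)
  let pV : Ideal ↥(R0 O) :=
    { carrier := {r | Small V (r : K)}
      zero_mem' := by simpa using small_zero V
      add_mem' := fun hr hs => by simpa using small_add hr hs
      smul_mem' := by
        intro c r hr
        have := small_mul_mem hr (hR0V c c.2)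
        rw [mul_comm] at this
        simpa using this }
  have hpV : pV ≠ ⊤ := by
    intro h
    have : (1 : ↥(R0 O)) ∈ pV := h ▸ Submodule.mem_top
    exact not_small_one V (by simpa using (show Small V ((1 : ↥(R0 O)) : K) from this))
  obtain ⟨i, hle⟩ := ideal_le_Pid O hn pV hpV
  refine ⟨i, fun a ha => ?_⟩
  show a ∈ V
  by_cases ha0 : a = 0
  · rw [ha0]; exact zero_mem _
  obtain ⟨s, hs0, hsU, hsj⟩ := loc O i a ha ha0
  have hsR : s ∈ R0 O := mem_R0.mpr fun j => (hsj j).1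
  have hsaR : s * a ∈ R0 O := mem_R0.mpr fun j => (hsj j).2
  have hnotpV : ¬ Small V s := by
    intro h
    exact not_small_of_unit hsU hs0 (hle (show (⟨s, hsR⟩ : ↥(R0 O)) ∈ pV from h))
  have hsV : s ∈ V := hR0V s hsR
  have hsinv : s⁻¹ ∈ V := ((unit_or_small hsV).resolve_right hnotpV).2
  have heq : a = s⁻¹ * (s * a) := by
    rw [← mul_assoc, inv_mul_cancel₀ hs0, one_mul]
  rw [heq]
  exact mul_mem hsinv (hR0V _ hsaR)

/-! ### Chains of valuation overrings -/

lemma comparable_of_common (A V W : ValuationSubring K)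
    (h1 : (A : Set K) ⊆ V) (h2 : (A : Set K) ⊆ W) : V ≤ W ∨ W ≤ V := by
  by_contra hcon
  push_neg at hcon
  obtain ⟨hVW, hWV⟩ := hcon
  obtain ⟨x, hxV, hxW⟩ := SetLike.not_le_iff_exists.mp hVW
  obtain ⟨y, hyW, hyV⟩ := SetLike.not_le_iff_exists.mp hWV
  have hx0 : x ≠ 0 := by rintro rfl; exact hxW (zero_mem _)
  have hy0 : y ≠ 0 := by rintro rfl; exact hyV (zero_mem _)
  rcases A.mem_or_inv_mem (x * y⁻¹) with h | h
  · apply hxW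
    have : x = (x * y⁻¹) * y := by
      rw [mul_assoc, inv_mul_cancel₀ hy0, mul_one]
    rw [this]
    exact mul_mem (h2 h) hyW
  · apply hyV
    rw [mul_inv, inv_inv] at h
    have : y = (x⁻¹ * y) * x := by
      rw [mul_comm x⁻¹ y, mul_assoc, inv_mul_cancel₀ hx0, mul_one]
    rw [this]
    exact mul_mem (h1 h) hxV

/-- Union of a nonempty chain of valuation subrings. -/
def chainUnion (S : Set (ValuationSubring K)) (hne : S.Nonempty)
    (hchain : ∀ V ∈ S, ∀ W ∈ S, V ≤ W ∨ W ≤ V) : ValuationSubring K where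
  carrier := ⋃ V ∈ S, (V : Set K)
  one_mem' := by
    obtain ⟨V, hVS⟩ := hne
    exact Set.mem_biUnion hVS (one_mem _)
  zero_mem' := by
    obtain ⟨V, hVS⟩ := hne
    exact Set.mem_biUnion hVS (zero_mem _)
  mul_mem' := by
    rintro a b ha hb
    obtain ⟨V, hVS, haV⟩ := Set.mem_iUnion₂.mp ha
    obtain ⟨W, hWS, hbW⟩ := Set.mem_iUnion₂.mp hb
    rcases hchain V hVS W hWS with h | h
    · exact Set.mem_biUnion hWS (mul_mem (h haV) hbW)
    · exact Set.mem_biUnion hVS (mul_mem haV (h hbW))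
  add_mem' := by
    rintro a b ha hb
    obtain ⟨V, hVS, haV⟩ := Set.mem_iUnion₂.mp ha
    obtain ⟨W, hWS, hbW⟩ := Set.mem_iUnion₂.mp hb
    rcases hchain V hVS W hWS with h | h
    · exact Set.mem_biUnion hWS (add_mem (h haV) hbW)
    · exact Set.mem_biUnion hVS (add_mem haV (h hbW))
  neg_mem' := by
    rintro a ha
    obtain ⟨V, hVS, haV⟩ := Set.mem_iUnion₂.mp ha
    exact Set.mem_biUnion hVS (neg_mem haV)
  mem_or_inv_mem' := by
    intro x
    obtain ⟨V, hVS⟩ := hne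
    rcases V.mem_or_inv_mem x with h | h
    · exact Or.inl (Set.mem_biUnion hVS h)
    · exact Or.inr (Set.mem_biUnion hVS h)

lemma mem_chainUnion {S : Set (ValuationSubring K)} {hne : S.Nonempty}
    {hchain : ∀ V ∈ S, ∀ W ∈ S, V ≤ W ∨ W ≤ V} {x : K} :
    x ∈ chainUnion S hne hchain ↔ ∃ V ∈ S, x ∈ V := by
  show x ∈ ⋃ V ∈ S, (V : Set K) ↔ _
  simp

/-! ### Grand assembly -/

include hJ0 hJadd hJmul hJsum in
lemma assembly (hn : 0 < n)
    (hJsmul : ∀ r : K, (∀ i, r ∈ O i) → ∀ x ∈ Js, r * x ∈ Js)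
    (hJ1 : (1:K) ∉ Js) (hJneg : ∀ x ∈ Js, -x ∈ Js)
    (hJinv : ∀ x ∈ Js, (1 + x)⁻¹ - 1 ∈ Js) :
    ∃ (m : ℕ), 0 < m ∧ ∃ O' : Fin m → ValuationSubring K,
      (∀ i j, i ≠ j → ¬ O' i ≤ O' j) ∧
      (stab Js = ⋂ i, (O' i : Set K)) ∧
      (Js = ⋂ i, ((O' i).nonunits : Set K)) := by
  classical
  -- `G` is nonempty
  have hG0 : ∃ V : ValuationSubring K, Gcond Js V := by
    let Bst : Subring K :=
      { carrier := stab Js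
        one_mem' := stab_one
        zero_mem' := stab_zero hJ0
        mul_mem' := fun ha hb => stab_mul ha hb
        add_mem' := fun ha hb => stab_add hJadd ha hb
        neg_mem' := fun ha => stab_neg hJneg ha }
    let I₀ : Ideal ↥Bst :=
      { carrier := {z | (z : K) ∈ Js}
        zero_mem' := hJ0
        add_mem' := fun ha hb => hJadd _ ha _ hb
        smul_mem' := fun c z hz => c.2 _ hz }
    have hI₀ : I₀ ≠ ⊤ := by
      intro h
      exact hJ1 (by simpa using (show ((1 : ↥Bst) : K) ∈ Js from (h ▸ Submodule.mem_top : (1 : ↥Bst) ∈ I₀)))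
    obtain ⟨V, hGV, -⟩ := chev_extract (B := Bst) I₀ hI₀
      (fun z hz => ⟨J_subset_stab hJmul hz, hz⟩) (fun r hr => hr)
    exact ⟨V, hGV⟩
  -- the family of "greatest" overrings above each `O i`
  set FAM : Set (ValuationSubring K) :=
    {U | Gcond Js U ∧ ∃ i, (O i : Set K) ⊆ (U : Set K) ∧
      ∀ V : ValuationSubring K, Gcond Js V → (O i : Set K) ⊆ (V : Set K) → V ≤ U} with hFAM
  have hcover : ∀ V : ValuationSubring K, Gcond Js V → ∃ U ∈ FAM, V ≤ U := by
    intro V hGV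
    obtain ⟨i, hiV⟩ := lemX O hn hJsmul V hGV.1
    set Si : Set (ValuationSubring K) :=
      {W | Gcond Js W ∧ (O i : Set K) ⊆ (W : Set K)} with hSi
    have hne : Si.Nonempty := ⟨V, hGV, hiV⟩
    have hchain : ∀ V' ∈ Si, ∀ W ∈ Si, V' ≤ W ∨ W ≤ V' := fun V' hV' W hW =>
      comparable_of_common (O i) V' W hV'.2 hW.2
    set U := chainUnion Si hne hchain with hU
    have hmemU : ∀ W ∈ Si, W ≤ U := by
      intro W hW x hx
      exact mem_chainUnion.mpr ⟨W, hW, hx⟩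
    have hGU : Gcond Js U := by
      constructor
      · exact fun r hr => hmemU V ⟨hGV, hiV⟩ (hGV.1 hr)
      · intro z hz
        show z ∈ U.nonunits
        rw [mem_nonunits_iff']
        by_cases hz0 : z = 0
        · exact Or.inl hz0
        refine Or.inr fun hzinv => ?_
        obtain ⟨W, hWS, hzW⟩ := mem_chainUnion.mp hzinv
        have hzn := hWS.1.2 hz
        rw [SetLike.mem_coe, mem_nonunits_iff'] at hzn
        rcases hzn with h | h
        · exact hz0 h
        · exact h hzW
    have hUFam : U ∈ FAM := by
      refine ⟨hGU, i, ?_, ?_⟩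
      · exact fun a ha => hmemU V ⟨hGV, hiV⟩ (hiV ha)
      · exact fun V' hGV' hiV' => hmemU V' ⟨hGV', hiV'⟩
    exact ⟨U, hUFam, hmemU V ⟨hGV, hiV⟩⟩
  -- FAM is finite
  have hFAMfin : FAM.Finite := by
    have hTi : ∀ i : Fin n, Set.Subsingleton {U : ValuationSubring K |
        Gcond Js U ∧ (O i : Set K) ⊆ (U : Set K) ∧
        ∀ V : ValuationSubring K, Gcond Js V → (O i : Set K) ⊆ (V : Set K) → V ≤ U} := by
      intro i U hU U' hU'
      exact le_antisymm (hU'.2.2 U hU.1 hU.2.1) (hU.2.2 U' hU'.1 hU'.2.1)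
    refine Set.Finite.subset (Set.finite_iUnion fun i => (hTi i).finite) ?_
    rintro U ⟨hG, i, h1, h2⟩
    exact Set.mem_iUnion.mpr ⟨i, hG, h1, h2⟩
  -- the maximal members of FAM
  set F : Set (ValuationSubring K) := {U | U ∈ FAM ∧ ∀ W ∈ FAM, U ≤ W → W = U} with hF
  have hFfin : F.Finite := hFAMfin.subset fun U hU => hU.1
  have hcov2 : ∀ V : ValuationSubring K, Gcond Js V → ∃ U ∈ F, V ≤ U := by
    intro V hGV
    obtain ⟨U, hUF, hVU⟩ := hcover V hGV
    have hsfin : {W | W ∈ FAM ∧ U ≤ W}.Finite := hFAMfin.subset fun W hW => hW.1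
    obtain ⟨W, hW, hmax⟩ := Set.Finite.exists_maximalFor id _ hsfin ⟨U, hUF, le_rfl⟩
    refine ⟨W, ⟨hW.1, fun W' hW' hle => ?_⟩, hVU.trans hW.2⟩
    exact le_antisymm (hmax ⟨hW', hW.2.trans hle⟩ hle) hle
  have hFne : F.Nonempty := by
    obtain ⟨V₀, hGV₀⟩ := hG0
    obtain ⟨U, hUF, -⟩ := hcov2 V₀ hGV₀
    exact ⟨U, hUF⟩
  -- enumerate F
  set s : Finset (ValuationSubring K) := hFfin.toFinset with hs
  have hs_mem : ∀ {V : ValuationSubring K}, V ∈ s ↔ V ∈ F := fun {V} =>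
    Set.Finite.mem_toFinset _
  have hm : 0 < s.card := by
    obtain ⟨U, hU⟩ := hFne
    exact Finset.card_pos.mpr ⟨U, hs_mem.mpr hU⟩
  set O' : Fin s.card → ValuationSubring K := fun k => ((s.equivFin.symm k : s) : ValuationSubring K)
    with hO'
  have hO'F : ∀ k, O' k ∈ F := fun k => hs_mem.mp (s.equivFin.symm k).2
  have hO'inj : Function.Injective O' := by
    intro k k' h
    have : s.equivFin.symm k = s.equivFin.symm k' := Subtype.ext h
    exact s.equivFin.symm.injective this
  have hO'surj : ∀ V ∈ F, ∃ k, O' k = V := by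
    intro V hV
    refine ⟨s.equivFin ⟨V, hs_mem.mpr hV⟩, ?_⟩
    rw [hO']
    simp
  -- incomparability
  have hinc : ∀ i j, i ≠ j → ¬ O' i ≤ O' j := by
    intro i j hij hle
    have := (hO'F i).2 (O' j) (hO'F j).1 hle
    exact hij (hO'inj this).symm
  -- the J-side identity
  have hJeq : Js = ⋂ k, ((O' k).nonunits : Set K) := by
    apply Set.Subset.antisymm
    · intro z hz
      exact Set.mem_iInter.mpr fun k => (hO'F k).1.1.2 hz
    · intro z hz
      by_contra hzJ
      have hz0 : z ≠ 0 := by rintro rfl; exact hzJ hJ0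
      obtain ⟨V, hGV, hzV⟩ := exists_V_of_not_mem O hJ0 hJadd hJmul hJsum hn hJsmul hJ1
        hJneg hJinv z hz0 hzJ
      obtain ⟨U, hUF, hVU⟩ := hcov2 V hGV
      obtain ⟨k, hk⟩ := hO'surj U hUF
      have hzn : z ∈ ((O' k).nonunits : Set K) := Set.mem_iInter.mp hz k
      rw [SetLike.mem_coe, mem_nonunits_iff'] at hzn
      rcases hzn with h | h
      · exact hz0 h
      · exact h (hk ▸ hVU hzV)
  -- the stabilizer identity
  have hSeq : stab Js = ⋂ k, ((O' k) : Set K) := by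
    apply Set.Subset.antisymm
    · intro r hr
      exact Set.mem_iInter.mpr fun k => (hO'F k).1.1.1 hr
    · intro r hr
      intro y hy
      show r * y ∈ Js
      rw [hJeq]
      refine Set.mem_iInter.mpr fun k => ?_
      show r * y ∈ ((O' k).nonunits : Set K)
      rw [SetLike.mem_coe, mem_nonunits_iff']
      by_cases h0 : r * y = 0
      · exact Or.inl h0
      refine Or.inr fun hinv => ?_
      have hy0 : y ≠ 0 := fun h => h0 (by rw [h, mul_zero])
      have hr0 : r ≠ 0 := left_ne_zero_of_mul h0
      have hrk : r ∈ O' k := Set.mem_iInter.mp hr k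
      have hyinv : y⁻¹ ∈ O' k := by
        have heq : y⁻¹ = (r * y)⁻¹ * r := by
          rw [mul_inv, mul_comm r⁻¹ y⁻¹, mul_assoc, inv_mul_cancel₀ hr0, mul_one]
        rw [heq]
        exact mul_mem hinv hrk
      have hyJ := (hO'F k).1.1.2 hy
      rw [SetLike.mem_coe, mem_nonunits_iff'] at hyJ
      rcases hyJ with h | h
      · exact hy0 h
      · exact h hyinv
  exact ⟨s.card, hm, O', hinc, hSeq, hJeq⟩

end MVJR

/-- Let `K` be a field, `R₀` a multi-valuation ring on `K`, and `J` an `R₀`-submodule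
of `K` such that (i) `J·J = J` and (ii) `1 + J` is a subgroup of `Kˣ`.  Then the
stabilizer ring `{x ∈ K : x·J ⊆ J}` is an intersection of pairwise incomparable
valuation subrings `O_1, …, O_n` of `K`, and `J = m_1 ∩ ⋯ ∩ m_n` where `m_i` is the
maximal ideal of `O_i` (expressed via `(O i).nonunits`); i.e. `J` is the Jacobson
radical of the multi-valuation ring `{x ∈ K : x·J ⊆ J}`. -/
theorem idempotent_module_is_jacobson_radical_of_multiValuationRing
    {K : Type*} [Field K] (R₀ : Subring K)
    (hR₀ : ∃ n : ℕ, 0 < n ∧ ∃ O : Fin n → ValuationSubring K,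
        R₀ = ⨅ i, (O i).toSubring)
    (J : Submodule ↥R₀ K)
    (hmul : ∀ x ∈ J, ∀ y ∈ J, x * y ∈ J)
    (hsum : ∀ z ∈ J, ∃ (m : ℕ) (x y : Fin m → K),
        (∀ j, x j ∈ J) ∧ (∀ j, y j ∈ J) ∧ z = ∑ j, x j * y j)
    (hneg : (-1 : K) ∉ J)
    (hgrp_mul : ∀ x ∈ J, ∀ y ∈ J, (1 + x) * (1 + y) - 1 ∈ J)
    (hgrp_inv : ∀ x ∈ J, (1 + x)⁻¹ - 1 ∈ J) :
    ∃ (m : ℕ), 0 < m ∧ ∃ O' : Fin m → ValuationSubring K,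
      (∀ i j, i ≠ j → ¬ O' i ≤ O' j) ∧
      ({x : K | ∀ y ∈ J, x * y ∈ J} = ⋂ i, (O' i : Set K)) ∧
      ((J : Set K) = ⋂ i, ((O' i).nonunits : Set K)) := by
  obtain ⟨n, hn, O, rfl⟩ := hR₀
  have hJ0 : (0:K) ∈ (J : Set K) := J.zero_mem
  have hJadd : ∀ x ∈ (J : Set K), ∀ y ∈ (J : Set K), x + y ∈ (J : Set K) :=
    fun x hx y hy => J.add_mem hx hy
  have hJmul' : ∀ x ∈ (J : Set K), ∀ y ∈ (J : Set K), x * y ∈ (J : Set K) := hmul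
  have hJsum' : ∀ z ∈ (J : Set K), ∃ (m : ℕ) (x y : Fin m → K),
      (∀ j, x j ∈ (J : Set K)) ∧ (∀ j, y j ∈ (J : Set K)) ∧ z = ∑ j, x j * y j := hsum
  have hJsmul : ∀ r : K, (∀ i, r ∈ O i) → ∀ x ∈ (J : Set K), r * x ∈ (J : Set K) := by
    intro r hr x hx
    have hrR : r ∈ ⨅ i, (O i).toSubring := Subring.mem_iInf.mpr hr
    have := J.smul_mem ⟨r, hrR⟩ hx
    rwa [Subring.smul_def, smul_eq_mul] at this
  have hJ1 : (1:K) ∉ (J : Set K) := fun h => hneg (by simpa using J.neg_mem h)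
  have hJneg : ∀ x ∈ (J : Set K), -x ∈ (J : Set K) := fun x hx => J.neg_mem hx
  obtain ⟨m, hm, O', hinc, hSeq, hJeq⟩ :=
    MVJR.assembly O hJ0 hJadd hJmul' hJsum' hn hJsmul hJ1 hJneg hgrp_inv
  exact ⟨m, hm, O', hinc, hSeq, hJeq⟩
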